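/- (Example 4.9, K-theory, module structure) The ring P_K(α) of integral piecewise Laurent polynomials on the fan Σ_{(1,1,2)} is a free module over the Laurent polynomial ring S^±_ℤ(α_1,α_2) = ℤ[α_1^{±1},α_2^{±1}] (acting diagonally) with basis {(1,1,1), ε, ζ}, where ε = (0, 1−α_1², 1−α_2) and ζ = (0, (1−α_1)(α_2−α_1²), 0). -/

import Mathlib

noncomputable section

/-- The Laurent polynomial ring `S^±_ℤ(α₁,α₂) = ℤ[α₁^{±1},α₂^{±1}]`, realised as the
group algebra of `ℤ²` over `ℤ`. -/
abbrev L2 := AddMonoidAlgebra ℤ (Fin 2 → ℤ)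

/-- The monomial `α₁`. -/
def alpha1 : L2 := AddMonoidAlgebra.single ![1, 0] 1

/-- The monomial `α₂`. -/
def alpha2 : L2 := AddMonoidAlgebra.single ![0, 1] 1

/-- The ring of integral piecewise Laurent polynomials on the fan `Σ_{(1,1,2)}` of
`ℙ(1,1,2)`: triples `(f₀, f₁, f₂)` in `S^±_ℤ(α₁,α₂)` (component `fᵢ` attached to the
maximal cone `σᵢ`) with `(1−α₁) ∣ f₀ − f₁`, `(1−α₂) ∣ f₀ − f₂` and
`(1−α₁²α₂^{−1}) ∣ f₁ − f₂`. -/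
def PK112 : Set (Fin 3 → L2) :=
  {f | (1 - alpha1) ∣ f 0 - f 1 ∧ (1 - alpha2) ∣ f 0 - f 2 ∧
    (1 - AddMonoidAlgebra.single ![2, -1] 1) ∣ f 1 - f 2}

/-- The piecewise Laurent polynomial `ε = (0, 1−α₁², 1−α₂)`. -/
def epsElt : Fin 3 → L2 := ![0, 1 - alpha1 ^ 2, 1 - alpha2]

/-- The piecewise Laurent polynomial `ζ = (0, (1−α₁)(α₂−α₁²), 0)`. -/
def zetaElt : Fin 3 → L2 := ![0, (1 - alpha1) * (alpha2 - alpha1 ^ 2), 0]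

namespace PK112Aux

open AddMonoidAlgebra

/-- the monomial `γ = α₁²α₂⁻¹` -/
def gam : L2 := AddMonoidAlgebra.single ![2, -1] 1

/-- the monomial `α₂⁻¹` -/
def a2inv : L2 := AddMonoidAlgebra.single ![0, -1] 1

lemma sms (a b : Fin 2 → ℤ) (x y : ℤ) :
    AddMonoidAlgebra.single a x * AddMonoidAlgebra.single b y
      = AddMonoidAlgebra.single (a + b) (x * y) :=
  AddMonoidAlgebra.single_mul_single a b x y

lemma vec_add (a b c d : ℤ) : (![a, b] + ![c, d]) = ![a + c, b + d] := by
  funext i; fin_cases i <;> simp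

lemma vec00 : (![0, 0] : Fin 2 → ℤ) = 0 := by
  funext i; fin_cases i <;> simp

lemma one_eq : (1 : L2) = AddMonoidAlgebra.single ![0, 0] 1 := by
  rw [vec00]; exact AddMonoidAlgebra.one_def

lemma alpha2_mul_gam : alpha2 * gam = alpha1 ^ 2 := by
  rw [alpha2, gam, sms, sq, alpha1, sms]
  norm_num [vec_add]

lemma alpha1_sq : alpha1 ^ 2 = AddMonoidAlgebra.single ![2, 0] 1 := by
  rw [sq, alpha1, sms]; norm_num [vec_add]

lemma single_ne_single (a b : Fin 2 → ℤ) (hab : a ≠ b) :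
    (AddMonoidAlgebra.single a 1 : L2) ≠ AddMonoidAlgebra.single b 1 := by
  intro h
  rcases AddMonoidAlgebra.single_inj.mp h with ⟨h1, _⟩ | ⟨h1, _⟩
  · exact hab h1
  · exact one_ne_zero h1

lemma one_sub_alpha1_ne : (1 : L2) - alpha1 ≠ 0 := by
  rw [sub_ne_zero, one_eq, alpha1]
  apply single_ne_single
  intro h; have := congrFun h 0; simp at this

lemma one_sub_alpha2_ne : (1 : L2) - alpha2 ≠ 0 := by
  rw [sub_ne_zero, one_eq, alpha2]
  apply single_ne_single
  intro h; have := congrFun h 1; simp at this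

lemma sub_sq_ne : alpha2 - alpha1 ^ 2 ≠ 0 := by
  rw [sub_ne_zero, alpha2, alpha1_sq]
  apply single_ne_single
  intro h; have := congrFun h 0; simp at this

/-- projection killing the second exponent -/
def projHom : (Fin 2 → ℤ) →+ (Fin 2 → ℤ) where
  toFun v := ![v 0, 0]
  map_zero' := by funext i; fin_cases i <;> simp
  map_add' a b := by funext i; fin_cases i <;> simp

/-- "set `α₂ = 1`" ring homomorphism -/
def sMap : L2 →+* L2 := AddMonoidAlgebra.mapDomainRingHom ℤ projHom

lemma sMap_single (v : Fin 2 → ℤ) (c : ℤ) :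
    sMap (AddMonoidAlgebra.single v c) = AddMonoidAlgebra.single ![v 0, 0] c := by
  show AddMonoidAlgebra.mapDomain (⇑projHom) (AddMonoidAlgebra.single v c) = _
  rw [AddMonoidAlgebra.mapDomain_single]
  rfl

lemma sMap_alpha1 : sMap alpha1 = alpha1 := by
  rw [alpha1, sMap_single]; norm_num

lemma sMap_alpha2 : sMap alpha2 = 1 := by
  rw [alpha2, sMap_single]; norm_num [← one_eq]

/-- `(1-α₂) ∣ single ![0,n] 1 - 1` for natural `n` -/
lemma dvd_tpow_nat (n : ℕ) :
    (1 - alpha2) ∣ (AddMonoidAlgebra.single ![0, (n : ℤ)] 1 - 1 : L2) := by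
  induction n with
  | zero => simp [one_eq]
  | succ n ih =>
    have key : (AddMonoidAlgebra.single ![0, ((n + 1 : ℕ) : ℤ)] 1 - 1 : L2)
        = (AddMonoidAlgebra.single ![0, (n : ℤ)] 1 - 1)
          + AddMonoidAlgebra.single ![0, (n : ℤ)] 1 * (alpha2 - 1) := by
      rw [alpha2, mul_sub, sms, mul_one]
      push_cast
      rw [vec_add]
      ring_nf
    rw [key]
    refine dvd_add ih (Dvd.dvd.mul_left ?_ _)
    exact (dvd_neg.mpr dvd_rfl).trans (by rw [neg_sub])

lemma tpow_mul_tpow (m n : ℤ) :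
    (AddMonoidAlgebra.single ![0, m] 1 : L2) * AddMonoidAlgebra.single ![0, n] 1
      = AddMonoidAlgebra.single ![0, m + n] 1 := by
  rw [sms]; norm_num [vec_add]

lemma dvd_tpow (n : ℤ) :
    (1 - alpha2) ∣ (AddMonoidAlgebra.single ![0, n] 1 - 1 : L2) := by
  obtain ⟨m, rfl | rfl⟩ := Int.eq_nat_or_neg n
  · exact dvd_tpow_nat m
  · have key : (AddMonoidAlgebra.single ![0, -(m : ℤ)] 1 - 1 : L2)
        = -(AddMonoidAlgebra.single ![0, -(m : ℤ)] 1
            * (AddMonoidAlgebra.single ![0, (m : ℤ)] 1 - 1)) := by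
      rw [mul_sub, tpow_mul_tpow, mul_one, neg_add_cancel]
      rw [← one_eq]
      ring
    rw [key]
    exact dvd_neg.mpr ((dvd_tpow_nat m).mul_left _)

/-- every `f` is congruent to `sMap f` modulo `1 - α₂` -/
lemma dvd_sub_sMap (f : L2) : (1 - alpha2) ∣ f - sMap f := by
  induction f using AddMonoidAlgebra.induction with
  | zero => simp
  | single_add a b f _ _ ih =>
    have hsingle : (1 - alpha2) ∣
        (AddMonoidAlgebra.single a b - sMap (AddMonoidAlgebra.single a b) : L2) := by
      rw [sMap_single]
      have key : (AddMonoidAlgebra.single a b - AddMonoidAlgebra.single ![a 0, 0] b : L2)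
          = AddMonoidAlgebra.single ![a 0, 0] b
            * (AddMonoidAlgebra.single ![0, a 1] 1 - 1) := by
        rw [mul_sub, sms, mul_one, mul_one, vec_add]
        congr 2
        funext i; fin_cases i <;> simp
      rw [key]
      exact (dvd_tpow (a 1)).mul_left _
    have hsplit : ∀ g h : L2, g + h - sMap (g + h)
        = (g - sMap g) + (h - sMap h) := by
      intro g h; rw [map_add]; ring
    rw [hsplit]
    exact dvd_add hsingle ih

lemma cancel_dvd (u : L2) (h : (1 - alpha2) ∣ (1 - alpha1) * u) : (1 - alpha2) ∣ u := by
  obtain ⟨w, hw⟩ := h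
  have hs : (1 - alpha1) * sMap u = 0 := by
    have h2 := congrArg sMap hw
    simp only [map_mul, map_sub, map_one, sMap_alpha1, sMap_alpha2, sub_self,
      zero_mul] at h2
    exact h2
  have hu0 : sMap u = 0 :=
    (mul_eq_zero.mp hs).resolve_left one_sub_alpha1_ne
  have hd := dvd_sub_sMap u
  rwa [hu0, sub_zero] at hd

/-- key coprimality lemma for `1-α₁` and `1-α₂` -/
lemma keyB (X : L2) (h1 : (1 - alpha1) ∣ X) (h2 : (1 - alpha2) ∣ X) :
    (1 - alpha1) * (1 - alpha2) ∣ X := by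
  obtain ⟨u, rfl⟩ := h1
  obtain ⟨v, hv⟩ := cancel_dvd u h2
  exact ⟨v, by rw [hv]; ring⟩

/-- the involution `(m,n) ↦ (m+2n, -n)` of `ℤ²` -/
def T : (Fin 2 → ℤ) ≃+ (Fin 2 → ℤ) where
  toFun v := ![v 0 + 2 * v 1, -(v 1)]
  invFun v := ![v 0 + 2 * v 1, -(v 1)]
  left_inv v := by funext i; fin_cases i <;> simp <;> ring
  right_inv v := by funext i; fin_cases i <;> simp <;> ring
  map_add' a b := by funext i; fin_cases i <;> simp <;> ring

/-- the corresponding automorphism of `L2` -/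
def psi : L2 ≃ₐ[ℤ] L2 := AddMonoidAlgebra.domCongr ℤ ℤ T

lemma psi_single (v : Fin 2 → ℤ) (c : ℤ) :
    psi (AddMonoidAlgebra.single v c) = AddMonoidAlgebra.single (T v) c :=
  AddMonoidAlgebra.domCongr_single (R := ℤ) (A := ℤ) T v c

lemma psi_symm_single (v : Fin 2 → ℤ) (c : ℤ) :
    psi.symm (AddMonoidAlgebra.single v c) = AddMonoidAlgebra.single (T v) c := by
  have h : psi (AddMonoidAlgebra.single (T v) c) = AddMonoidAlgebra.single v c := by
    rw [psi_single]
    congr 1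
    exact T.left_inv v
  rw [← h, AlgEquiv.symm_apply_apply]

lemma T_alpha1 : T ![1, 0] = ![1, 0] := by
  funext i; fin_cases i <;> simp [T]

lemma T_alpha2 : T ![0, 1] = ![2, -1] := by
  funext i; fin_cases i <;> simp [T]

lemma T_gam : T ![2, -1] = ![0, 1] := by
  funext i; fin_cases i <;> simp [T]

lemma psi_symm_alpha1 : psi.symm alpha1 = alpha1 := by
  rw [alpha1, psi_symm_single, T_alpha1]

lemma psi_symm_gam : psi.symm gam = alpha2 := by
  rw [gam, psi_symm_single, T_gam, alpha2]

lemma psi_alpha1 : psi alpha1 = alpha1 := by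
  rw [alpha1, psi_single, T_alpha1]

lemma psi_alpha2 : psi alpha2 = gam := by
  rw [alpha2, psi_single, T_alpha2, gam]

/-- key coprimality lemma for `1-α₁` and `1-γ` -/
lemma keyGamma (X : L2) (h1 : (1 - alpha1) ∣ X) (h2 : (1 - gam) ∣ X) :
    (1 - alpha1) * (1 - gam) ∣ X := by
  have h1' : (1 - alpha1) ∣ psi.symm X := by
    have h := map_dvd psi.symm h1
    rwa [map_sub, map_one, psi_symm_alpha1] at h
  have h2' : (1 - alpha2) ∣ psi.symm X := by
    have h := map_dvd psi.symm h2
    rwa [map_sub, map_one, psi_symm_gam] at h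
  have key := keyB _ h1' h2'
  have h := map_dvd psi key
  rwa [map_mul, map_sub, map_sub, map_one, psi_alpha1, psi_alpha2,
    AlgEquiv.apply_symm_apply] at h

lemma alpha2_unit_mul : alpha2 * a2inv = 1 := by
  rw [alpha2, a2inv, sms]
  norm_num [vec_add, ← one_eq]

lemma sub_factor : alpha2 - alpha1 ^ 2 = alpha2 * (1 - gam) := by
  rw [mul_sub, mul_one, alpha2_mul_gam]

end PK112Aux

open PK112Aux

/-- **Example 4.9, K-theory, module structure.**
`P_K(α)` for `Σ_{(1,1,2)}` is a free module over `S^±_ℤ(α₁,α₂)` (acting diagonally)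
with basis `{1, ε, ζ}`: the diagonal constants, `ε` and `ζ` lie in `P_K(α)`, and every
`f ∈ P_K(α)` is uniquely `a·1 + b·ε + c·ζ` with `a, b, c ∈ S^±_ℤ(α₁,α₂)`. -/
theorem PK112_free_module :
    epsElt ∈ PK112 ∧ zetaElt ∈ PK112 ∧
    (∀ a : L2, (fun _ => a : Fin 3 → L2) ∈ PK112) ∧
    ∀ f ∈ PK112, ∃! abc : L2 × L2 × L2,
      f = fun k => abc.1 + abc.2.1 * epsElt k + abc.2.2 * zetaElt k := by
  have hgam : (AddMonoidAlgebra.single ![2, -1] 1 : L2) = gam := rfl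
  have heps0 : epsElt 0 = 0 := rfl
  have heps1 : epsElt 1 = 1 - alpha1 ^ 2 := rfl
  have heps2 : epsElt 2 = 1 - alpha2 := rfl
  have hzeta0 : zetaElt 0 = 0 := rfl
  have hzeta1 : zetaElt 1 = (1 - alpha1) * (alpha2 - alpha1 ^ 2) := rfl
  have hzeta2 : zetaElt 2 = 0 := rfl
  refine ⟨?_, ?_, ?_, ?_⟩
  · -- ε ∈ P_K
    refine ⟨⟨-(1 + alpha1), ?_⟩, ⟨-1, ?_⟩, ⟨alpha2, ?_⟩⟩
    · simp only [heps0, heps1]; ring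
    · simp only [heps0, heps2]; ring
    · simp only [heps1, heps2, hgam]; linear_combination sub_factor
  · -- ζ ∈ P_K
    refine ⟨⟨-(alpha2 - alpha1 ^ 2), ?_⟩, ⟨0, ?_⟩, ⟨(1 - alpha1) * alpha2, ?_⟩⟩
    · simp only [hzeta0, hzeta1]; ring
    · simp only [hzeta0, hzeta2]; ring
    · simp only [hzeta1, hzeta2, hgam]; linear_combination (1 - alpha1) * sub_factor
  · -- constants
    intro a
    exact ⟨⟨0, by simp⟩, ⟨0, by simp⟩, ⟨0, by simp⟩⟩
  · -- existence and uniqueness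
    rintro f ⟨h01, h02, h12⟩
    rw [hgam] at h12
    obtain ⟨q2, hq2⟩ := h02
    set X : L2 := f 1 - f 0 + q2 * (1 - alpha1 ^ 2) with hX
    have hX1 : (1 - alpha1) ∣ X := by
      obtain ⟨w, hw⟩ := h01
      exact ⟨q2 * (1 + alpha1) - w, by rw [hX]; linear_combination -hw⟩
    have hX2 : (1 - gam) ∣ X := by
      have hXe : X = (f 1 - f 2) + (q2 * alpha2) * (1 - gam) := by
        rw [hX]
        linear_combination -hq2 + q2 * sub_factor
      rw [hXe]
      exact dvd_add h12 (Dvd.intro_left _ rfl)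
    obtain ⟨d, hd⟩ := keyGamma X hX1 hX2
    have hc : (d * a2inv) * ((1 - alpha1) * (alpha2 - alpha1 ^ 2)) = X := by
      rw [sub_factor, hd]
      calc d * a2inv * ((1 - alpha1) * (alpha2 * (1 - gam)))
          = (alpha2 * a2inv) * ((1 - alpha1) * (1 - gam) * d) := by ring
        _ = (1 - alpha1) * (1 - gam) * d := by rw [alpha2_unit_mul, one_mul]
    refine ⟨⟨f 0, -q2, d * a2inv⟩, ?_, ?_⟩
    · funext k
      fin_cases k
      · show f 0 = f 0 + -q2 * epsElt 0 + d * a2inv * zetaElt 0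
        rw [heps0, hzeta0]; ring
      · show f 1 = f 0 + -q2 * epsElt 1 + d * a2inv * zetaElt 1
        rw [heps1, hzeta1]
        linear_combination -hc - hX
      · show f 2 = f 0 + -q2 * epsElt 2 + d * a2inv * zetaElt 2
        rw [heps2, hzeta2]
        linear_combination -hq2
    · rintro ⟨a, b, c⟩ habc
      have e0 := congrFun habc 0
      have e1 := congrFun habc 1
      have e2 := congrFun habc 2
      simp only [heps0, heps1, heps2, hzeta0, hzeta1, hzeta2, mul_zero, add_zero] at e0 e1 e2
      -- e0 : f 0 = a
      have hb : b * (1 - alpha2) = -q2 * (1 - alpha2) := by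
        linear_combination -e2 - hq2 + e0
      have hbv : b = -q2 := mul_right_cancel₀ one_sub_alpha2_ne hb
      have hcc : c * ((1 - alpha1) * (alpha2 - alpha1 ^ 2))
          = (d * a2inv) * ((1 - alpha1) * (alpha2 - alpha1 ^ 2)) := by
        rw [hc]
        linear_combination -e1 - hX - (1 - alpha1 ^ 2) * hbv + e0
      have hcv : c = d * a2inv :=
        mul_right_cancel₀ (mul_ne_zero one_sub_alpha1_ne sub_sq_ne) hcc
      simp only [Prod.mk.injEq]
      exact ⟨e0.symm, hbv, hcv⟩
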